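/- Let p be a prime and N ≥ 2 an integer with p ≤ N. If v_p(H_N − 1) > 0, then N ≥ 4p. -/

import Mathlib

/-- The `n`-th harmonic number `H_n = ∑_{i=1}^n 1/i`, as a rational number. -/
def H (n : ℕ) : ℚ := ∑ i ∈ Finset.range n, (1 : ℚ) / (i + 1)

lemma H_pos {n : ℕ} (hn : 0 < n) : 0 < H n := by
  apply Finset.sum_pos
  · intro i _
    positivity
  · exact Finset.nonempty_range_iff.mpr hn.ne'

/-- If `q * d = n` with `n, d` positive naturals and `p ∤ n`, then `v_p(q) ≤ 0`. -/
lemma val_nonpos_aux (p : ℕ) [hp : Fact p.Prime] (q : ℚ) (n d : ℕ) (hd : 0 < d)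
    (hn : 0 < n) (hpn : ¬ p ∣ n) (hq : q * (d : ℚ) = (n : ℚ)) :
    padicValRat p q ≤ 0 := by
  have hd0 : (d : ℚ) ≠ 0 := by positivity
  have hn0 : (n : ℚ) ≠ 0 := by positivity
  have : q = (n : ℚ) / (d : ℚ) := by field_simp [hq]; exact hq
  rw [this, padicValRat.div hn0 hd0, padicValRat.of_nat, padicValRat.of_nat,
    padicValNat.eq_zero_of_not_dvd hpn]
  simp

theorem vp_harmonic_sub_one_pos_imp_four_p (p N : ℕ) (hp : p.Prime) (hN : 2 ≤ N)
    (hpN : p ≤ N) (h : 0 < padicValRat p (H N - 1)) : 4 * p ≤ N := by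
  haveI : Fact p.Prime := ⟨hp⟩
  by_contra hc
  push_neg at hc
  have hp2 := hp.two_le
  set k := N / p with hk
  have hdm := Nat.div_add_mod N p
  have hml : N % p < p := Nat.mod_lt N (by omega)
  have hk1 : 1 ≤ k := (Nat.one_le_div_iff (by omega)).mpr hpN
  have hk3 : k ≤ 3 := by
    have : N / p < 4 := (Nat.div_lt_iff_lt_mul (by omega)).mpr (by omega)
    omega
  -- the sum split
  set f : ℕ → ℚ := fun i => (1 : ℚ) / (i + 1) with hf
  have fpos : ∀ i : ℕ, 0 < f i := by
    intro i
    have : (0:ℚ) < (i:ℚ) + 1 := by positivity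
    simp only [hf]
    positivity
  set T : ℚ := ∑ i ∈ (Finset.Ico 1 N).filter (fun i => p ∣ (i + 1)), f i with hT
  set B : ℚ := ∑ i ∈ (Finset.Ico 1 N).filter (fun i => ¬ p ∣ (i + 1)), f i with hB
  have hsplit : H N - 1 = T + B := by
    have h1 : H N = f 0 + ∑ i ∈ Finset.Ico 1 N, f i := by
      rw [H, Finset.range_eq_Ico, Finset.sum_eq_sum_Ico_succ_bot (by omega : 0 < N)]
    have h2 : f 0 = 1 := by simp [hf]
    rw [h1, h2, hT, hB, Finset.sum_filter_add_sum_filter_not]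
    ring
  -- T = (1/p) * H k
  have hTval : T = (1 / (p:ℚ)) * H k := by
    rw [hT, H, Finset.mul_sum]
    apply Finset.sum_nbij' (fun i => (i + 1) / p - 1) (fun j => p * (j + 1) - 1)
    · intro a ha
      simp only [Finset.mem_filter, Finset.mem_Ico] at ha
      obtain ⟨⟨ha1, ha2⟩, m, hm⟩ := ha
      simp only [Finset.mem_range]
      have hm1 : 1 ≤ m := by
        rcases m with _ | m
        · rw [Nat.mul_zero] at hm; omega
        · omega
      have h1 : (a + 1) / p = m := by rw [hm]; exact Nat.mul_div_cancel_left m (by omega)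
      rw [h1]
      have : m ≤ N / p := (Nat.le_div_iff_mul_le (by omega)).mpr (by rw [mul_comm]; omega)
      omega
    · intro b hb
      simp only [Finset.mem_range] at hb
      simp only [Finset.mem_filter, Finset.mem_Ico]
      have hb1 : b + 1 ≤ N / p := by omega
      have hle : p * (b + 1) ≤ N := by
        calc p * (b+1) ≤ p * (N / p) := Nat.mul_le_mul_left p hb1
          _ ≤ N := Nat.mul_div_le N p
      have hx : p ≤ p * (b + 1) := Nat.le_mul_of_pos_right p (by omega)
      refine ⟨⟨by omega, by omega⟩, b + 1, by omega⟩
    · intro a ha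
      simp only [Finset.mem_filter, Finset.mem_Ico] at ha
      obtain ⟨⟨ha1, ha2⟩, m, hm⟩ := ha
      have hm1 : 1 ≤ m := by
        rcases m with _ | m
        · rw [Nat.mul_zero] at hm; omega
        · omega
      have h1 : (a + 1) / p = m := by rw [hm]; exact Nat.mul_div_cancel_left m (by omega)
      have h2 : m - 1 + 1 = m := by omega
      rw [h1, h2]
      omega
    · intro b _
      have h1 : p * (b + 1) - 1 + 1 = p * (b + 1) := by
        have : p ≤ p * (b + 1) := Nat.le_mul_of_pos_right p (by omega)
        omega
      rw [h1, Nat.mul_div_cancel_left (b+1) (by omega)]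
      omega
    · intro a ha
      simp only [Finset.mem_filter, Finset.mem_Ico] at ha
      obtain ⟨⟨ha1, ha2⟩, m, hm⟩ := ha
      have hm1 : 1 ≤ m := by
        rcases m with _ | m
        · rw [Nat.mul_zero] at hm; omega
        · omega
      have h1 : (a + 1) / p = m := by rw [hm]; exact Nat.mul_div_cancel_left m (by omega)
      simp only [hf, h1]
      have h2 : ((m - 1 : ℕ) : ℚ) + 1 = (m : ℚ) := by
        rw [Nat.cast_sub hm1]; push_cast; ring
      rw [h2]
      have h3 : ((a : ℚ) + 1) = (p : ℚ) * m := by exact_mod_cast hm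
      rw [h3]
      have hpq : (p : ℚ) ≠ 0 := by positivity
      have hmq : (m : ℚ) ≠ 0 := by
        have : (0:ℚ) < m := by exact_mod_cast hm1
        positivity
      field_simp
  have hHk2 : H 2 = 3 / 2 := by norm_num [H, Finset.sum_range_succ]
  have hHk3 : H 3 = 11 / 6 := by norm_num [H, Finset.sum_range_succ]
  by_cases hexc : (p = 3 ∧ k = 2) ∨ (p = 11 ∧ k = 3)
  · -- finite cases
    rcases hexc with ⟨hp3, hk2⟩ | ⟨hp11, hk3'⟩
    · subst hp3
      have hNr : 6 ≤ N ∧ N ≤ 8 := by omega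
      obtain ⟨h6, h8⟩ := hNr
      interval_cases N
      · exact absurd h (val_nonpos_aux 3 _ 29 20 (by norm_num) (by norm_num) (by norm_num)
          (by norm_num [H, Finset.sum_range_succ])).not_gt
      · exact absurd h (val_nonpos_aux 3 _ 223 140 (by norm_num) (by norm_num) (by norm_num)
          (by norm_num [H, Finset.sum_range_succ])).not_gt
      · exact absurd h (val_nonpos_aux 3 _ 481 280 (by norm_num) (by norm_num) (by norm_num)
          (by norm_num [H, Finset.sum_range_succ])).not_gt
    · subst hp11
      have h33 : 33 ≤ N := by omega
      have h43 : N ≤ 43 := by omega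
      interval_cases N
      · exact absurd h (val_nonpos_aux 11 _ 40548494360749 13127595717600 (by norm_num)
          (by norm_num) (by norm_num) (by norm_num [H, Finset.sum_range_succ])).not_gt
      · exact absurd h (val_nonpos_aux 11 _ 40934600117149 13127595717600 (by norm_num)
          (by norm_num) (by norm_num) (by norm_num [H, Finset.sum_range_succ])).not_gt
      · exact absurd h (val_nonpos_aux 11 _ 41309674280509 13127595717600 (by norm_num)
          (by norm_num) (by norm_num) (by norm_num [H, Finset.sum_range_succ])).not_gt
      · exact absurd h (val_nonpos_aux 11 _ 41674329717109 13127595717600 (by norm_num)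
          (by norm_num) (by norm_num) (by norm_num [H, Finset.sum_range_succ])).not_gt
      · exact absurd h (val_nonpos_aux 11 _ 1555077795250633 485721041551200 (by norm_num)
          (by norm_num) (by norm_num) (by norm_num [H, Finset.sum_range_succ])).not_gt
      · exact absurd h (val_nonpos_aux 11 _ 1567859927923033 485721041551200 (by norm_num)
          (by norm_num) (by norm_num) (by norm_num [H, Finset.sum_range_succ])).not_gt
      · exact absurd h (val_nonpos_aux 11 _ 1580314313603833 485721041551200 (by norm_num)
          (by norm_num) (by norm_num) (by norm_num [H, Finset.sum_range_succ])).not_gt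
      · exact absurd h (val_nonpos_aux 11 _ 1592457339642613 485721041551200 (by norm_num)
          (by norm_num) (by norm_num) (by norm_num [H, Finset.sum_range_succ])).not_gt
      · exact absurd h (val_nonpos_aux 11 _ 65776471966898333 19914562703599200 (by norm_num)
          (by norm_num) (by norm_num) (by norm_num [H, Finset.sum_range_succ])).not_gt
      · exact absurd h (val_nonpos_aux 11 _ 9464375460249419 2844937529085600 (by norm_num)
          (by norm_num) (by norm_num) (by norm_num [H, Finset.sum_range_succ])).not_gt
      · exact absurd h (val_nonpos_aux 11 _ 409813082319810617 122332313750680800 (by norm_num)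
          (by norm_num) (by norm_num) (by norm_num [H, Finset.sum_range_succ])).not_gt
  · -- main case
    push_neg at hexc
    have hHkval : padicValRat p (H k) ≤ 0 := by
      interval_cases k
      · simp [H]
      · rw [hHk2]
        refine val_nonpos_aux p _ 3 2 (by norm_num) (by norm_num) ?_ (by norm_num)
        rw [Nat.prime_dvd_prime_iff_eq hp (by norm_num)]
        exact fun h3 => hexc.1 h3 rfl
      · rw [hHk3]
        refine val_nonpos_aux p _ 11 6 (by norm_num) (by norm_num) ?_ (by norm_num)
        rw [Nat.prime_dvd_prime_iff_eq hp (by norm_num)]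
        exact fun h11 => hexc.2 h11 rfl
    have hHk0 : H k ≠ 0 := (H_pos (by omega)).ne'
    have hpq0 : (1 / (p:ℚ)) ≠ 0 := by
      have : (0:ℚ) < p := by exact_mod_cast (by omega : 0 < p)
      positivity
    have hT0 : T ≠ 0 := by
      rw [hTval]
      exact mul_ne_zero hpq0 hHk0
    have hvp : padicValRat p (1 / (p:ℚ)) = -1 := by
      rw [one_div, padicValRat.inv, padicValRat.self hp.one_lt]
    have hvT : padicValRat p T = padicValRat p (H k) - 1 := by
      rw [hTval, padicValRat.mul hpq0 hHk0, hvp]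
      ring
    have hvTle : padicValRat p T ≤ -1 := by omega
    by_cases hB0 : B = 0
    · rw [hsplit, hB0, add_zero] at h
      omega
    · have hBpos : 0 < B := by
        rw [hB]
        apply Finset.sum_pos (fun i _ => fpos i)
        exact Finset.nonempty_of_sum_ne_zero (by rw [← hB]; exact hB0)
      have hvB : -1 < padicValRat p B := by
        have hfp : f (p - 1) = 1 / (p:ℚ) := by
          simp only [hf]
          congr 1
          have : ((p - 1 : ℕ) : ℚ) = (p : ℚ) - 1 := by
            push_cast [Nat.cast_sub (by omega : 1 ≤ p)]
            ring
          rw [this]; ring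
        have := padicValRat.lt_sum_of_lt (p := p) (j := p - 1) (F := f)
          (S := (Finset.Ico 1 N).filter (fun i => ¬ p ∣ (i + 1)))
          (Finset.nonempty_of_sum_ne_zero (by rw [← hB]; exact hB0))
          (fun i hi => by
            simp only [Finset.mem_filter, Finset.mem_Ico] at hi
            obtain ⟨⟨hi1, hi2⟩, hnd⟩ := hi
            have hfi : f i = ((i + 1 : ℕ) : ℚ)⁻¹ := by
              simp only [hf]
              push_cast
              rw [one_div]
            rw [hfp, hfi, hvp, padicValRat.inv, padicValRat.of_nat,
              padicValNat.eq_zero_of_not_dvd hnd]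
            norm_num)
          fpos
        rwa [hfp, hvp, ← hB] at this
      have hne : T + B ≠ 0 := by positivity
      have := padicValRat.add_eq_of_lt (p := p) hne hT0 hB0 (by omega)
      rw [hsplit, this] at h
      omega
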